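/- Let n ≥ 1, let U ⊆ ℝ^{n+1} be open, let g : U → (symmetric invertible (n+1)×(n+1) real matrices) be smooth, let ω : U → (0,∞) be smooth, and let u : U → ℝ be smooth. For an invertible symmetric matrix field G define the coordinate wave operator □_G u := |det G|^{−1/2} Σ_{μ,ν=0}^{n} ∂_μ( |det G|^{1/2} (G^{−1})^{μν} ∂_ν u ). Set g̃ := ω²g and γ := −ω^{(n−1)/2}·□_{g̃}( ω^{(1−n)/2} ). Then on U: □_g( ω^{(n−1)/2} u ) = ω^{(n+3)/2}·( □_{g̃} u + γ·u ). -/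

import Mathlib

noncomputable section

/-- Partial derivative `∂_μ` of a real-valued function on `ℝ^{n+1}`. -/
def pd {k : ℕ} (μ : Fin k) (f : (Fin k → ℝ) → ℝ) (x : Fin k → ℝ) : ℝ :=
  fderiv ℝ f x (Pi.single μ 1)

/-- The coordinate wave operator
`□_G u = |det G|^{-1/2} Σ_{μ,ν} ∂_μ(|det G|^{1/2} (G⁻¹)^{μν} ∂_ν u)`. -/
def waveOp {n : ℕ} (G : (Fin (n + 1) → ℝ) → Fin (n + 1) → Fin (n + 1) → ℝ)
    (u : (Fin (n + 1) → ℝ) → ℝ) (x : Fin (n + 1) → ℝ) : ℝ :=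
  |(Matrix.of (G x)).det| ^ (-(1 : ℝ) / 2) *
    ∑ μ, ∑ ν,
      pd μ (fun y =>
        |(Matrix.of (G y)).det| ^ ((1 : ℝ) / 2) * (Matrix.of (G y))⁻¹ μ ν * pd ν u y) x

open Filter Matrix Topology

namespace FH

variable {k : ℕ}

lemma pd_congr {f h : (Fin k → ℝ) → ℝ} {x : Fin k → ℝ} (hfh : f =ᶠ[nhds x] h) (μ : Fin k) :
    pd μ f x = pd μ h x := by
  unfold pd; rw [hfh.fderiv_eq]

lemma pd_congrOn {U : Set (Fin k → ℝ)} (hU : IsOpen U) {f h : (Fin k → ℝ) → ℝ}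
    {x : Fin k → ℝ} (hx : x ∈ U) (hfh : ∀ y ∈ U, f y = h y) (μ : Fin k) :
    pd μ f x = pd μ h x :=
  pd_congr (Filter.eventuallyEq_of_mem (hU.mem_nhds hx) hfh) μ

lemma pd_const (c : ℝ) (μ : Fin k) (x : Fin k → ℝ) : pd μ (fun _ => c) x = 0 := by
  unfold pd; simp

lemma pd_add {f h : (Fin k → ℝ) → ℝ} {x : Fin k → ℝ} (hf : DifferentiableAt ℝ f x)
    (hh : DifferentiableAt ℝ h x) (μ : Fin k) :
    pd μ (fun y => f y + h y) x = pd μ f x + pd μ h x := by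
  unfold pd; rw [fderiv_fun_add hf hh]; simp

lemma pd_mul {f h : (Fin k → ℝ) → ℝ} {x : Fin k → ℝ} (hf : DifferentiableAt ℝ f x)
    (hh : DifferentiableAt ℝ h x) (μ : Fin k) :
    pd μ (fun y => f y * h y) x = pd μ f x * h x + f x * pd μ h x := by
  unfold pd; rw [fderiv_fun_mul hf hh]
  simp only [ContinuousLinearMap.add_apply, ContinuousLinearMap.smul_apply, smul_eq_mul]
  ring

lemma pd_mul3 {f1 f2 f3 : (Fin k → ℝ) → ℝ} {x : Fin k → ℝ} (h1 : DifferentiableAt ℝ f1 x)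
    (h2 : DifferentiableAt ℝ f2 x) (h3 : DifferentiableAt ℝ f3 x) (μ : Fin k) :
    pd μ (fun y => f1 y * f2 y * f3 y) x
      = pd μ f1 x * f2 x * f3 x + f1 x * pd μ f2 x * f3 x + f1 x * f2 x * pd μ f3 x := by
  rw [pd_mul (h1.fun_mul h2) h3, pd_mul h1 h2]; ring

lemma pd_const_mul {f : (Fin k → ℝ) → ℝ} {x : Fin k → ℝ} (hf : DifferentiableAt ℝ f x)
    (c : ℝ) (μ : Fin k) :
    pd μ (fun y => c * f y) x = c * pd μ f x := by
  unfold pd; rw [fderiv_const_mul hf c]; simp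

lemma pd_rpow {ω : (Fin k → ℝ) → ℝ} {x : Fin k → ℝ} (hω : DifferentiableAt ℝ ω x)
    (hne : ω x ≠ 0) (p : ℝ) (μ : Fin k) :
    pd μ (fun y => ω y ^ p) x = p * ω x ^ (p - 1) * pd μ ω x := by
  unfold pd
  rw [(hω.hasFDerivAt.rpow_const (Or.inl hne)).fderiv]
  simp [mul_assoc]

lemma diffAt {U : Set (Fin k → ℝ)} (hU : IsOpen U) {f : (Fin k → ℝ) → ℝ}
    (hf : ContDiffOn ℝ (⊤ : ℕ∞) f U) {x : Fin k → ℝ} (hx : x ∈ U) :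
    DifferentiableAt ℝ f x :=
  (hf.differentiableOn (by simp)).differentiableAt (hU.mem_nhds hx)

lemma contDiffOn_pd {U : Set (Fin k → ℝ)} (hU : IsOpen U) {f : (Fin k → ℝ) → ℝ}
    (hf : ContDiffOn ℝ (⊤ : ℕ∞) f U) (ν : Fin k) :
    ContDiffOn ℝ (⊤ : ℕ∞) (pd ν f) U := by
  have h1 : ContDiffOn ℝ (⊤ : ℕ∞) (fderiv ℝ f) U := hf.fderiv_of_isOpen hU (by simp)
  exact h1.clm_apply contDiffOn_const

lemma contDiffOn_finset_prod {U : Set (Fin k → ℝ)} {ι : Type*} [DecidableEq ι] (t : Finset ι)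
    (f : ι → (Fin k → ℝ) → ℝ) (hf : ∀ i ∈ t, ContDiffOn ℝ (⊤ : ℕ∞) (f i) U) :
    ContDiffOn ℝ (⊤ : ℕ∞) (fun y => ∏ i ∈ t, f i y) U := by
  classical
  induction t using Finset.induction_on with
  | empty => simpa using contDiffOn_const
  | insert _ _ hnot ih =>
    simp only [Finset.prod_insert hnot]
    exact (hf _ (Finset.mem_insert_self _ _)).mul
      (ih fun i hi => hf i (Finset.mem_insert_of_mem hi))

lemma contDiffOn_det {U : Set (Fin k → ℝ)} {m : ℕ}
    (M : (Fin k → ℝ) → Matrix (Fin m) (Fin m) ℝ)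
    (hM : ∀ i j, ContDiffOn ℝ (⊤ : ℕ∞) (fun y => M y i j) U) :
    ContDiffOn ℝ (⊤ : ℕ∞) (fun y => (M y).det) U := by
  simp only [Matrix.det_apply, Units.smul_def, zsmul_eq_mul]
  apply ContDiffOn.sum
  intro σ _
  exact contDiffOn_const.mul (contDiffOn_finset_prod _ _ fun i _ => hM _ _)

lemma contDiffAt_abs_rpow (p : ℝ) {t : ℝ} (ht : t ≠ 0) :
    ContDiffAt ℝ (⊤ : ℕ∞) (fun t : ℝ => |t| ^ p) t := by
  rcases ht.lt_or_gt with h | h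
  · have hev : (fun t : ℝ => |t| ^ p) =ᶠ[nhds t] fun t : ℝ => (-t) ^ p := by
      filter_upwards [Iio_mem_nhds h] with z hz
      rw [abs_of_neg hz]
    exact (((Real.contDiffAt_rpow_const_of_ne (x := -t) (p := p)
      (neg_ne_zero.mpr ht)).comp t (contDiff_neg.contDiffAt))).congr_of_eventuallyEq hev
  · have hev : (fun t : ℝ => |t| ^ p) =ᶠ[nhds t] fun t : ℝ => t ^ p := by
      filter_upwards [Ioi_mem_nhds h] with z hz
      rw [abs_of_pos hz]
    exact (Real.contDiffAt_rpow_const_of_ne ht).congr_of_eventuallyEq hev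

lemma final_alg (D S1 S2 S3 W2 W3 V : ℝ) (h1 : S1 = W2 * W3 * S2 + S3 * V) :
    D * S1 = W2 * (W3 * D * S2) + (D * S3) * V := by rw [h1]; ring

end FH

def Eterm (n : ℕ) (g : (Fin (n+1) → ℝ) → Fin (n+1) → Fin (n+1) → ℝ)
    (ω : (Fin (n+1) → ℝ) → ℝ) (s : ℝ) (x : Fin (n+1) → ℝ) : ℝ :=
  |(Matrix.of (g x)).det| ^ (-(1:ℝ)/2) *
    ∑ μ, ∑ ν, pd μ (fun y =>
      s * (|(Matrix.of (g y)).det| ^ ((1:ℝ)/2) * (Matrix.of (g y))⁻¹ μ ν)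
        * (ω y ^ (s-1) * pd ν ω y)) x

lemma key (n : ℕ) (U : Set (Fin (n+1) → ℝ)) (hU : IsOpen U)
    (g : (Fin (n+1) → ℝ) → Fin (n+1) → Fin (n+1) → ℝ) (ω v : (Fin (n+1) → ℝ) → ℝ)
    (hg : ContDiffOn ℝ (⊤ : ℕ∞) g U)
    (hgsymm : ∀ x ∈ U, ∀ μ ν, g x μ ν = g x ν μ)
    (hginv : ∀ x ∈ U, IsUnit (Matrix.of (g x)))
    (hω : ContDiffOn ℝ (⊤ : ℕ∞) ω U) (hωpos : ∀ x ∈ U, 0 < ω x)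
    (hv : ContDiffOn ℝ (⊤ : ℕ∞) v U)
    (s : ℝ) (hs : s = ((n:ℝ)-1)/2) (x : Fin (n+1) → ℝ) (hx : x ∈ U) :
    waveOp g (fun y => ω y ^ s * v y) x
      = ω x ^ (s+2) * waveOp (fun y μ ν => ω y ^ 2 * g y μ ν) v x
        + Eterm n g ω s x * v x := by
  -- entry smoothness
  have hentry : ∀ μ ν : Fin (n+1), ContDiffOn ℝ (⊤ : ℕ∞) (fun y => g y μ ν) U := by
    intro μ ν
    have h1 : ContDiff ℝ (⊤ : ℕ∞) (fun h : Fin (n+1) → Fin (n+1) → ℝ => h μ ν) :=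
      (ContinuousLinearMap.proj (R := ℝ) (φ := fun _ : Fin (n+1) => ℝ) ν).contDiff.comp
        (ContinuousLinearMap.proj (R := ℝ) (φ := fun _ : Fin (n+1) => (Fin (n+1) → ℝ)) μ).contDiff
    exact h1.comp_contDiffOn hg
  have hdet : ContDiffOn ℝ (⊤ : ℕ∞) (fun y => (Matrix.of (g y)).det) U :=
    FH.contDiffOn_det (fun y => Matrix.of (g y)) (fun i j => hentry i j)
  have hdetne : ∀ y ∈ U, (Matrix.of (g y)).det ≠ 0 := fun y hy =>
    ((Matrix.isUnit_iff_isUnit_det _).mp (hginv y hy)).ne_zero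
  have ha : ContDiffOn ℝ (⊤ : ℕ∞) (fun y => |(Matrix.of (g y)).det| ^ ((1:ℝ)/2)) U :=
    fun y hy => by
      have h1 := FH.contDiffAt_abs_rpow ((1:ℝ)/2) (hdetne y hy)
      exact (h1.comp y (hdet.contDiffAt (hU.mem_nhds hy))).contDiffWithinAt
  have hadj : ∀ μ ν : Fin (n+1),
      ContDiffOn ℝ (⊤ : ℕ∞) (fun y => (Matrix.of (g y)).adjugate μ ν) U := by
    intro μ ν
    simp only [Matrix.adjugate_apply]
    apply FH.contDiffOn_det
    intro i j
    by_cases hi : i = ν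
    · simp only [Matrix.updateRow_apply, hi, if_true]
      exact contDiffOn_const
    · simp only [Matrix.updateRow_apply, hi, if_false]
      exact hentry i j
  have hinvE : ∀ μ ν : Fin (n+1),
      ContDiffOn ℝ (⊤ : ℕ∞) (fun y => (Matrix.of (g y))⁻¹ μ ν) U := by
    intro μ ν
    have heq : (fun y => (Matrix.of (g y))⁻¹ μ ν)
        = fun y => ((Matrix.of (g y)).det)⁻¹ * (Matrix.of (g y)).adjugate μ ν := by
      funext y
      rw [Matrix.inv_def]
      simp [Matrix.smul_apply, smul_eq_mul, Ring.inverse_eq_inv']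
    rw [heq]
    exact (hdet.inv hdetne).mul (hadj μ ν)
  have hb : ∀ μ ν : Fin (n+1), ContDiffOn ℝ (⊤ : ℕ∞)
      (fun y => |(Matrix.of (g y)).det| ^ ((1:ℝ)/2) * (Matrix.of (g y))⁻¹ μ ν) U :=
    fun μ ν => ha.mul (hinvE μ ν)
  have hωp : ∀ p : ℝ, ContDiffOn ℝ (⊤ : ℕ∞) (fun y => ω y ^ p) U := fun p y hy =>
    ((Real.contDiffAt_rpow_const_of_ne (ne_of_gt (hωpos y hy))).comp y
      (hω.contDiffAt (hU.mem_nhds hy))).contDiffWithinAt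
  have hpdω : ∀ ν : Fin (n+1), ContDiffOn ℝ (⊤ : ℕ∞) (pd ν ω) U :=
    fun ν => FH.contDiffOn_pd hU hω ν
  have hpdv : ∀ ν : Fin (n+1), ContDiffOn ℝ (⊤ : ℕ∞) (pd ν v) U :=
    fun ν => FH.contDiffOn_pd hU hv ν
  have hWpos : 0 < ω x := hωpos x hx
  have hWne : ω x ≠ 0 := ne_of_gt hWpos
  have dB : ∀ μ ν : Fin (n+1), DifferentiableAt ℝ
      (fun y => |(Matrix.of (g y)).det| ^ ((1:ℝ)/2) * (Matrix.of (g y))⁻¹ μ ν) x :=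
    fun μ ν => FH.diffAt hU (hb μ ν) hx
  have dωx : DifferentiableAt ℝ ω x := FH.diffAt hU hω hx
  have dvx : DifferentiableAt ℝ v x := FH.diffAt hU hv hx
  have dωp : ∀ p : ℝ, DifferentiableAt ℝ (fun y => ω y ^ p) x :=
    fun p => FH.diffAt hU (hωp p) hx
  have dpdω : ∀ ν : Fin (n+1), DifferentiableAt ℝ (pd ν ω) x :=
    fun ν => FH.diffAt hU (hpdω ν) hx
  have dpdv : ∀ ν : Fin (n+1), DifferentiableAt ℝ (pd ν v) x :=
    fun ν => FH.diffAt hU (hpdv ν) hx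
  -- conformal matrix facts
  have hMy : ∀ y, (Matrix.of (fun μ' ν' => ω y ^ 2 * g y μ' ν')
      : Matrix (Fin (n+1)) (Fin (n+1)) ℝ) = (ω y ^ 2) • Matrix.of (g y) := by
    intro y; ext i j
    simp [Matrix.smul_apply, smul_eq_mul]
  have hdetT : ∀ y ∈ U, ∀ p : ℝ,
      |(Matrix.of (fun μ' ν' => ω y ^ 2 * g y μ' ν')).det| ^ p
        = ω y ^ ((2*(n:ℝ)+2) * p) * |(Matrix.of (g y)).det| ^ p := by
    intro y hy p
    rw [hMy y, Matrix.det_smul]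
    simp only [Fintype.card_fin]
    rw [abs_mul, abs_pow, abs_of_pos (pow_pos (hωpos y hy) 2)]
    rw [Real.mul_rpow (by positivity) (abs_nonneg _)]
    congr 1
    rw [← pow_mul, ← Real.rpow_natCast (ω y) (2*(n+1)),
        ← Real.rpow_mul (le_of_lt (hωpos y hy))]
    congr 1
    push_cast; ring
  have hinvT : ∀ y ∈ U, ∀ μ ν : Fin (n+1),
      (Matrix.of (fun μ' ν' => ω y ^ 2 * g y μ' ν'))⁻¹ μ ν
        = (ω y ^ 2)⁻¹ * (Matrix.of (g y))⁻¹ μ ν := by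
    intro y hy μ ν
    have h2 : (ω y ^ 2 : ℝ) ≠ 0 := pow_ne_zero _ (ne_of_gt (hωpos y hy))
    haveI := invertibleOfNonzero h2
    rw [hMy y, Matrix.inv_smul (Matrix.of (g y)) (ω y ^ 2) ((Matrix.isUnit_iff_isUnit_det _).mp (hginv y hy))]
    simp [Matrix.smul_apply, smul_eq_mul, invOf_eq_inv]
  have hBsym : ∀ μ ν : Fin (n+1), (Matrix.of (g x))⁻¹ μ ν = (Matrix.of (g x))⁻¹ ν μ := by
    intro μ ν
    have hT : (Matrix.of (g x))ᵀ = Matrix.of (g x) := by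
      ext i j
      simp only [Matrix.transpose_apply, Matrix.of_apply]
      exact hgsymm x hx j i
    have h1 : (Matrix.of (g x))⁻¹ᵀ = (Matrix.of (g x))⁻¹ := by
      rw [Matrix.transpose_nonsing_inv, hT]
    have h2 := congrFun (congrFun h1 ν) μ
    simpa [Matrix.transpose_apply] using h2
  -- expansions
  have hE1 : ∀ μ ν : Fin (n+1),
      pd μ (fun y => |(Matrix.of (g y)).det| ^ ((1:ℝ)/2) * (Matrix.of (g y))⁻¹ μ ν
          * pd ν (fun y => ω y ^ s * v y) y) x
      = pd μ (fun y => |(Matrix.of (g y)).det| ^ ((1:ℝ)/2) * (Matrix.of (g y))⁻¹ μ ν) x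
          * (s * ω x ^ (s-1) * pd ν ω x * v x + ω x ^ s * pd ν v x)
        + (|(Matrix.of (g x)).det| ^ ((1:ℝ)/2) * (Matrix.of (g x))⁻¹ μ ν)
          * (s * ((s-1) * ω x ^ (s-1-1) * pd μ ω x) * pd ν ω x * v x
            + s * ω x ^ (s-1) * pd μ (pd ν ω) x * v x
            + s * ω x ^ (s-1) * pd ν ω x * pd μ v x
            + s * ω x ^ (s-1) * pd μ ω x * pd ν v x
            + ω x ^ s * pd μ (pd ν v) x) := by
    intro μ ν
    have step1 : pd μ (fun y => |(Matrix.of (g y)).det| ^ ((1:ℝ)/2) * (Matrix.of (g y))⁻¹ μ ν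
          * pd ν (fun y => ω y ^ s * v y) y) x
        = pd μ (fun y => (|(Matrix.of (g y)).det| ^ ((1:ℝ)/2) * (Matrix.of (g y))⁻¹ μ ν)
            * (s * (ω y ^ (s-1) * pd ν ω y * v y))
          + (|(Matrix.of (g y)).det| ^ ((1:ℝ)/2) * (Matrix.of (g y))⁻¹ μ ν)
            * (ω y ^ s * pd ν v y)) x := by
      apply FH.pd_congrOn hU hx
      intro y hy
      have h1 : pd ν (fun y => ω y ^ s * v y) y
          = s * ω y ^ (s-1) * pd ν ω y * v y + ω y ^ s * pd ν v y := by
        rw [FH.pd_mul (FH.diffAt hU (hωp s) hy) (FH.diffAt hU hv hy) ν,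
            FH.pd_rpow (FH.diffAt hU hω hy) (ne_of_gt (hωpos y hy)) s ν]
      rw [h1]; ring
    rw [step1]
    rw [FH.pd_add ((dB μ ν).fun_mul ((((dωp (s-1)).fun_mul (dpdω ν)).fun_mul dvx).const_mul s))
        ((dB μ ν).fun_mul ((dωp s).fun_mul (dpdv ν))) μ]
    rw [FH.pd_mul (dB μ ν) ((((dωp (s-1)).fun_mul (dpdω ν)).fun_mul dvx).const_mul s) μ]
    rw [FH.pd_mul (dB μ ν) ((dωp s).fun_mul (dpdv ν)) μ]
    rw [FH.pd_const_mul (((dωp (s-1)).fun_mul (dpdω ν)).fun_mul dvx) s μ]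
    rw [FH.pd_mul3 (dωp (s-1)) (dpdω ν) dvx μ]
    rw [FH.pd_mul (dωp s) (dpdv ν) μ]
    rw [FH.pd_rpow dωx hWne (s-1) μ, FH.pd_rpow dωx hWne s μ]
    ring
  have hE2 : ∀ μ ν : Fin (n+1),
      pd μ (fun y => |(Matrix.of (fun μ' ν' => ω y ^ 2 * g y μ' ν')).det| ^ ((1:ℝ)/2)
          * (Matrix.of (fun μ' ν' => ω y ^ 2 * g y μ' ν'))⁻¹ μ ν * pd ν v y) x
      = ((n:ℝ)-1) * ω x ^ ((n:ℝ)-1-1) * pd μ ω x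
          * (|(Matrix.of (g x)).det| ^ ((1:ℝ)/2) * (Matrix.of (g x))⁻¹ μ ν) * pd ν v x
        + ω x ^ ((n:ℝ)-1) * pd μ (fun y => |(Matrix.of (g y)).det| ^ ((1:ℝ)/2)
            * (Matrix.of (g y))⁻¹ μ ν) x * pd ν v x
        + ω x ^ ((n:ℝ)-1) * (|(Matrix.of (g x)).det| ^ ((1:ℝ)/2) * (Matrix.of (g x))⁻¹ μ ν)
            * pd μ (pd ν v) x := by
    intro μ ν
    have step1 : pd μ (fun y => |(Matrix.of (fun μ' ν' => ω y ^ 2 * g y μ' ν')).det| ^ ((1:ℝ)/2)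
          * (Matrix.of (fun μ' ν' => ω y ^ 2 * g y μ' ν'))⁻¹ μ ν * pd ν v y) x
        = pd μ (fun y => ω y ^ ((n:ℝ)-1)
            * (|(Matrix.of (g y)).det| ^ ((1:ℝ)/2) * (Matrix.of (g y))⁻¹ μ ν) * pd ν v y) x := by
      apply FH.pd_congrOn hU hx
      intro y hy
      rw [hdetT y hy ((1:ℝ)/2), hinvT y hy μ ν]
      have hcomb : ω y ^ ((2*(n:ℝ)+2) * ((1:ℝ)/2)) * (ω y ^ 2)⁻¹ = ω y ^ ((n:ℝ)-1) := by
        have h2 : ((ω y)^2 : ℝ)⁻¹ = ω y ^ (-(2:ℝ)) := by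
          rw [← Real.rpow_natCast (ω y) 2, ← Real.rpow_neg (le_of_lt (hωpos y hy))]
          norm_num
        rw [h2, ← Real.rpow_add (hωpos y hy)]
        congr 1
        ring
      linear_combination (|(Matrix.of (g y)).det| ^ ((1:ℝ)/2) * (Matrix.of (g y))⁻¹ μ ν
        * pd ν v y) * hcomb
    rw [step1]
    rw [FH.pd_mul3 (dωp ((n:ℝ)-1)) (dB μ ν) (dpdv ν) μ]
    rw [FH.pd_rpow dωx hWne ((n:ℝ)-1) μ]
  have hE3 : ∀ μ ν : Fin (n+1),
      pd μ (fun y => s * (|(Matrix.of (g y)).det| ^ ((1:ℝ)/2) * (Matrix.of (g y))⁻¹ μ ν)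
          * (ω y ^ (s-1) * pd ν ω y)) x
      = s * pd μ (fun y => |(Matrix.of (g y)).det| ^ ((1:ℝ)/2) * (Matrix.of (g y))⁻¹ μ ν) x
          * (ω x ^ (s-1) * pd ν ω x)
        + s * (|(Matrix.of (g x)).det| ^ ((1:ℝ)/2) * (Matrix.of (g x))⁻¹ μ ν)
          * ((s-1) * ω x ^ (s-1-1) * pd μ ω x * pd ν ω x + ω x ^ (s-1) * pd μ (pd ν ω) x) := by
    intro μ ν
    rw [FH.pd_mul3 (differentiableAt_const s) (dB μ ν) ((dωp (s-1)).fun_mul (dpdω ν)) μ]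
    rw [FH.pd_mul (dωp (s-1)) (dpdω ν) μ, FH.pd_rpow dωx hWne (s-1) μ,
        FH.pd_const s μ x]
    ring
  -- power facts
  have q1 : ω x ^ (-s) * ω x ^ ((n:ℝ)-1) = ω x ^ s := by
    rw [← Real.rpow_add hWpos]
    exact congrArg (fun t : ℝ => ω x ^ t) (by rw [hs]; ring)
  have q2 : ω x ^ (-s) * ω x ^ ((n:ℝ)-1-1) = ω x ^ (s-1) := by
    rw [← Real.rpow_add hWpos]
    exact congrArg (fun t : ℝ => ω x ^ t) (by rw [hs]; ring)
  have hco : ((n:ℝ)-1) = 2*s := by rw [hs]; ring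
  have F1 : ω x ^ (s+2) * ω x ^ ((2*(n:ℝ)+2) * (-(1:ℝ)/2)) = ω x ^ (-s) := by
    rw [← Real.rpow_add hWpos]
    exact congrArg (fun t : ℝ => ω x ^ t) (by rw [hs]; ring)
  have hterm : ∀ μ ν : Fin (n+1),
      pd μ (fun y => |(Matrix.of (g y)).det| ^ ((1:ℝ)/2) * (Matrix.of (g y))⁻¹ μ ν) x
          * (s * ω x ^ (s-1) * pd ν ω x * v x + ω x ^ s * pd ν v x)
        + (|(Matrix.of (g x)).det| ^ ((1:ℝ)/2) * (Matrix.of (g x))⁻¹ μ ν)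
          * (s * ((s-1) * ω x ^ (s-1-1) * pd μ ω x) * pd ν ω x * v x
            + s * ω x ^ (s-1) * pd μ (pd ν ω) x * v x
            + s * ω x ^ (s-1) * pd ν ω x * pd μ v x
            + s * ω x ^ (s-1) * pd μ ω x * pd ν v x
            + ω x ^ s * pd μ (pd ν v) x)
      = ω x ^ (-s) *
          (((n:ℝ)-1) * ω x ^ ((n:ℝ)-1-1) * pd μ ω x
              * (|(Matrix.of (g x)).det| ^ ((1:ℝ)/2) * (Matrix.of (g x))⁻¹ μ ν) * pd ν v x
            + ω x ^ ((n:ℝ)-1) * pd μ (fun y => |(Matrix.of (g y)).det| ^ ((1:ℝ)/2)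
                * (Matrix.of (g y))⁻¹ μ ν) x * pd ν v x
            + ω x ^ ((n:ℝ)-1) * (|(Matrix.of (g x)).det| ^ ((1:ℝ)/2) * (Matrix.of (g x))⁻¹ μ ν)
                * pd μ (pd ν v) x)
        + (s * pd μ (fun y => |(Matrix.of (g y)).det| ^ ((1:ℝ)/2) * (Matrix.of (g y))⁻¹ μ ν) x
              * (ω x ^ (s-1) * pd ν ω x)
            + s * (|(Matrix.of (g x)).det| ^ ((1:ℝ)/2) * (Matrix.of (g x))⁻¹ μ ν)
              * ((s-1) * ω x ^ (s-1-1) * pd μ ω x * pd ν ω x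
                + ω x ^ (s-1) * pd μ (pd ν ω) x)) * v x
        + s * ω x ^ (s-1) * (|(Matrix.of (g x)).det| ^ ((1:ℝ)/2) * (Matrix.of (g x))⁻¹ μ ν)
            * pd ν ω x * pd μ v x
        - s * ω x ^ (s-1) * (|(Matrix.of (g x)).det| ^ ((1:ℝ)/2) * (Matrix.of (g x))⁻¹ μ ν)
            * pd μ ω x * pd ν v x := by
    intro μ ν
    linear_combination
      (-(pd μ (fun y => |(Matrix.of (g y)).det| ^ ((1:ℝ)/2) * (Matrix.of (g y))⁻¹ μ ν) x
          * pd ν v x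
        + (|(Matrix.of (g x)).det| ^ ((1:ℝ)/2) * (Matrix.of (g x))⁻¹ μ ν)
          * pd μ (pd ν v) x)) * q1
      + (-(((n:ℝ)-1) * (|(Matrix.of (g x)).det| ^ ((1:ℝ)/2) * (Matrix.of (g x))⁻¹ μ ν)
          * pd μ ω x * pd ν v x)) * q2
      + (-(ω x ^ (s-1) * (|(Matrix.of (g x)).det| ^ ((1:ℝ)/2) * (Matrix.of (g x))⁻¹ μ ν)
          * pd μ ω x * pd ν v x)) * hco
  have hswap : (∑ μ, ∑ ν, s * ω x ^ (s-1)
        * (|(Matrix.of (g x)).det| ^ ((1:ℝ)/2) * (Matrix.of (g x))⁻¹ μ ν)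
        * pd ν ω x * pd μ v x)
      = ∑ μ, ∑ ν, s * ω x ^ (s-1)
        * (|(Matrix.of (g x)).det| ^ ((1:ℝ)/2) * (Matrix.of (g x))⁻¹ μ ν)
        * pd μ ω x * pd ν v x := by
    rw [Finset.sum_comm]
    refine Finset.sum_congr rfl fun μ _ => Finset.sum_congr rfl fun ν _ => ?_
    rw [hBsym]
  have hsum : (∑ μ, ∑ ν,
        (pd μ (fun y => |(Matrix.of (g y)).det| ^ ((1:ℝ)/2) * (Matrix.of (g y))⁻¹ μ ν) x
          * (s * ω x ^ (s-1) * pd ν ω x * v x + ω x ^ s * pd ν v x)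
        + (|(Matrix.of (g x)).det| ^ ((1:ℝ)/2) * (Matrix.of (g x))⁻¹ μ ν)
          * (s * ((s-1) * ω x ^ (s-1-1) * pd μ ω x) * pd ν ω x * v x
            + s * ω x ^ (s-1) * pd μ (pd ν ω) x * v x
            + s * ω x ^ (s-1) * pd ν ω x * pd μ v x
            + s * ω x ^ (s-1) * pd μ ω x * pd ν v x
            + ω x ^ s * pd μ (pd ν v) x)))
      = ω x ^ (-s) * (∑ μ, ∑ ν,
          (((n:ℝ)-1) * ω x ^ ((n:ℝ)-1-1) * pd μ ω x
              * (|(Matrix.of (g x)).det| ^ ((1:ℝ)/2) * (Matrix.of (g x))⁻¹ μ ν) * pd ν v x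
            + ω x ^ ((n:ℝ)-1) * pd μ (fun y => |(Matrix.of (g y)).det| ^ ((1:ℝ)/2)
                * (Matrix.of (g y))⁻¹ μ ν) x * pd ν v x
            + ω x ^ ((n:ℝ)-1) * (|(Matrix.of (g x)).det| ^ ((1:ℝ)/2) * (Matrix.of (g x))⁻¹ μ ν)
                * pd μ (pd ν v) x))
        + (∑ μ, ∑ ν,
            (s * pd μ (fun y => |(Matrix.of (g y)).det| ^ ((1:ℝ)/2) * (Matrix.of (g y))⁻¹ μ ν) x
              * (ω x ^ (s-1) * pd ν ω x)
            + s * (|(Matrix.of (g x)).det| ^ ((1:ℝ)/2) * (Matrix.of (g x))⁻¹ μ ν)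
              * ((s-1) * ω x ^ (s-1-1) * pd μ ω x * pd ν ω x
                + ω x ^ (s-1) * pd μ (pd ν ω) x))) * v x := by
    rw [Finset.sum_congr rfl fun μ _ => Finset.sum_congr rfl fun ν _ => hterm μ ν]
    simp only [Finset.sum_add_distrib, Finset.sum_sub_distrib]
    rw [hswap, add_sub_cancel_right]
    congr 1
    all_goals simp only [Finset.mul_sum, Finset.sum_mul, mul_add, add_mul,
      Finset.sum_add_distrib]
  simp only [waveOp, Eterm]
  rw [Finset.sum_congr rfl fun μ _ => Finset.sum_congr rfl fun ν _ => hE1 μ ν]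
  rw [Finset.sum_congr rfl fun μ _ => Finset.sum_congr rfl fun ν _ => hE2 μ ν]
  rw [Finset.sum_congr rfl fun μ _ => Finset.sum_congr rfl fun ν _ => hE3 μ ν]
  rw [hdetT x hx (-(1:ℝ)/2)]
  apply FH.final_alg
  rw [F1]
  exact hsum

theorem stmt3 (n : ℕ) (hn : 1 ≤ n) (U : Set (Fin (n + 1) → ℝ)) (hU : IsOpen U)
    (g : (Fin (n + 1) → ℝ) → Fin (n + 1) → Fin (n + 1) → ℝ)
    (ω u : (Fin (n + 1) → ℝ) → ℝ)
    (hg : ContDiffOn ℝ (⊤ : ℕ∞) g U)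
    (hgsymm : ∀ x ∈ U, ∀ μ ν, g x μ ν = g x ν μ)
    (hginv : ∀ x ∈ U, IsUnit (Matrix.of (g x)))
    (hω : ContDiffOn ℝ (⊤ : ℕ∞) ω U) (hωpos : ∀ x ∈ U, 0 < ω x)
    (hu : ContDiffOn ℝ (⊤ : ℕ∞) u U) :
    ∀ x ∈ U,
      waveOp g (fun y => ω y ^ (((n : ℝ) - 1) / 2) * u y) x =
        ω x ^ (((n : ℝ) + 3) / 2) *
          (waveOp (fun y μ ν => ω y ^ 2 * g y μ ν) u x +
            (-(ω x ^ (((n : ℝ) - 1) / 2) *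
                waveOp (fun y μ ν => ω y ^ 2 * g y μ ν)
                  (fun y => ω y ^ ((1 - (n : ℝ)) / 2)) x)) * u x) := by
  intro x hx
  have hωp' : ContDiffOn ℝ (⊤ : ℕ∞) (fun y => ω y ^ ((1 - (n:ℝ))/2)) U := fun y hy =>
    ((Real.contDiffAt_rpow_const_of_ne (ne_of_gt (hωpos y hy))).comp y
      (hω.contDiffAt (hU.mem_nhds hy))).contDiffWithinAt
  set s : ℝ := ((n:ℝ) - 1) / 2 with hs
  have k1 := key n U hU g ω u hg hgsymm hginv hω hωpos hu s hs x hx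
  have k2 := key n U hU g ω (fun y => ω y ^ ((1 - (n:ℝ))/2)) hg hgsymm hginv hω hωpos
    hωp' s hs x hx
  have h0 : waveOp g (fun y => ω y ^ s * ω y ^ ((1 - (n:ℝ))/2)) x = 0 := by
    have hz : ∀ μ ν : Fin (n+1),
        pd μ (fun y => |(Matrix.of (g y)).det| ^ ((1:ℝ)/2) * (Matrix.of (g y))⁻¹ μ ν
          * pd ν (fun y => ω y ^ s * ω y ^ ((1 - (n:ℝ))/2)) y) x = 0 := by
      intro μ ν
      have h1 : ∀ y ∈ U, (|(Matrix.of (g y)).det| ^ ((1:ℝ)/2) * (Matrix.of (g y))⁻¹ μ ν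
          * pd ν (fun y => ω y ^ s * ω y ^ ((1 - (n:ℝ))/2)) y) = (fun _ => (0:ℝ)) y := by
        intro y hy
        have h2 : pd ν (fun y => ω y ^ s * ω y ^ ((1 - (n:ℝ))/2)) y
            = pd ν (fun _ => (1:ℝ)) y := by
          apply FH.pd_congrOn hU hy
          intro z hz'
          rw [← Real.rpow_add (hωpos z hz')]
          rw [show s + (1 - (n:ℝ))/2 = 0 by rw [hs]; ring]
          exact Real.rpow_zero _
        rw [h2, FH.pd_const, mul_zero]
      have h3 := FH.pd_congrOn hU hx h1 μ
      rw [h3, FH.pd_const]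
    simp only [waveOp]
    rw [Finset.sum_eq_zero fun μ _ => Finset.sum_eq_zero fun ν _ => hz μ ν, mul_zero]
  rw [h0] at k2
  rw [k1]
  rw [show ((n:ℝ) + 3) / 2 = s + 2 by rw [hs]; ring]
  have hp2 : ω x ^ ((1 - (n:ℝ))/2) * ω x ^ s = 1 := by
    rw [← Real.rpow_add (hωpos x hx), show (1 - (n:ℝ))/2 + s = 0 by rw [hs]; ring,
      Real.rpow_zero]
  linear_combination (u x * ω x ^ s) * k2.symm - (Eterm n g ω s x * u x) * hp2
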